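/- Let λ be a partition of m, let T₀ be a standard Young tableau of shape λ with descent composition α, and let γ = (γ_1,…,γ_n) be a weak composition of m (nonnegative integers summing to m). If the composition obtained from γ by deleting its zero parts refines α, then there is exactly one semistandard Young tableau T of shape λ with wt(T) = γ and std(T) = T₀; otherwise there is no such tableau. -/

import Mathlib

open scoped Classical

namespace QC

/-- A filling assigns a natural-number entry to each cell `(i, j)`;
entries are `0` outside the shape. Values are 1-based. -/
abbrev Filling : Type := ℕ → ℕ → ℕ

/-- The cell `(i, j)` (row `i`, column `j`, both 0-based) lies in the Young diagram of `lam`. -/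
def InShape (lam : List ℕ) (i j : ℕ) : Prop :=
  i < lam.length ∧ j < lam.getD i 0

/-- The finite set of cells of the Young diagram of `lam`. -/
def cells (lam : List ℕ) : Finset (ℕ × ℕ) :=
  (Finset.range lam.length).biUnion fun i =>
    ({i} : Finset ℕ) ×ˢ Finset.range (lam.getD i 0)

/-- `lam` is a partition of `m`: weakly decreasing, positive parts, summing to `m`. -/
def IsPartitionOf (m : ℕ) (lam : List ℕ) : Prop :=
  lam.Pairwise (· ≥ ·) ∧ (∀ x ∈ lam, 0 < x) ∧ lam.sum = m

/-- `a` is a composition of `m`: positive parts summing to `m`. -/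
def IsCompositionOf (m : ℕ) (a : List ℕ) : Prop :=
  (∀ x ∈ a, 0 < x) ∧ a.sum = m

/-- `T` is a semistandard Young tableau of shape `lam`: positive entries on the shape,
zero off the shape, rows weakly increasing, columns strictly increasing. -/
def IsSSYT (lam : List ℕ) (T : Filling) : Prop :=
  (∀ i j, ¬ InShape lam i j → T i j = 0) ∧
  (∀ i j, InShape lam i j → 0 < T i j) ∧
  (∀ i j1 j2, j1 ≤ j2 → InShape lam i j2 → T i j1 ≤ T i j2) ∧
  (∀ i1 i2 j, i1 < i2 → InShape lam i2 j → T i1 j < T i2 j)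

/-- All entries of `T` are at most `n`. -/
def EntriesLE (n : ℕ) (T : Filling) : Prop := ∀ i j, T i j ≤ n

/-- `T` is a standard Young tableau of shape `lam ⊢ m`: a semistandard tableau in which
each of `1, …, m` appears exactly once. -/
def IsSYT (lam : List ℕ) (m : ℕ) (T : Filling) : Prop :=
  IsSSYT lam T ∧ EntriesLE m T ∧
    ∀ k, 1 ≤ k → k ≤ m → ∃! c : ℕ × ℕ, InShape lam c.1 c.2 ∧ T c.1 c.2 = k

/-- `k` is a descent of the standard tableau `T`: `k + 1` lies in a strictly lower row. -/
def IsDescent (lam : List ℕ) (T : Filling) (k : ℕ) : Prop :=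
  ∃ i1 j1 i2 j2, InShape lam i1 j1 ∧ InShape lam i2 j2 ∧
    T i1 j1 = k ∧ T i2 j2 = k + 1 ∧ i1 < i2

/-- The sorted list of descents of `T`, a standard tableau with `m` cells. -/
noncomputable def descentList (lam : List ℕ) (m : ℕ) (T : Filling) : List ℕ :=
  ((Finset.Ico 1 m).filter fun k => IsDescent lam T k).sort (· ≤ ·)

/-- The number of descents of `T`. -/
noncomputable def numDescents (lam : List ℕ) (m : ℕ) (T : Filling) : ℕ :=
  ((Finset.Ico 1 m).filter fun k => IsDescent lam T k).card

/-- The descent composition `(d₁, d₂ - d₁, …, m - d_{s-1})` of a standard tableau. -/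
noncomputable def desComp (lam : List ℕ) (m : ℕ) (T : Filling) : List ℕ :=
  if m = 0 then [] else
    List.zipWith (· - ·) (descentList lam m T ++ [m]) (0 :: descentList lam m T)

/-- The number of cells of `T` carrying the entry `v`. -/
def countEq (lam : List ℕ) (T : Filling) (v : ℕ) : ℕ :=
  ((cells lam).filter fun c => T c.1 c.2 = v).card

/-- The weight of `T` as a list `(γ₁, …, γₙ)`, `γᵢ` the number of entries equal to `i`. -/
def wt (lam : List ℕ) (n : ℕ) (T : Filling) : List ℕ :=
  (List.range n).map fun v => countEq lam T (v + 1)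

/-- The standardization of `T`: cells are relabelled `1, …, m` in order of increasing entry,
breaking ties between equal entries by increasing column index. -/
noncomputable def stdize (lam : List ℕ) (T : Filling) : Filling := fun i j =>
  if InShape lam i j then
    ((cells lam).filter fun c =>
      T c.1 c.2 < T i j ∨ (T c.1 c.2 = T i j ∧ c.2 ≤ j)).card
  else 0

/-- Given a weak composition `g`, `destValue g k` is the unique `i` with
`g₁ + ⋯ + g_{i-1} < k ≤ g₁ + ⋯ + g_i` (and `0` for `k = 0`). -/
def destValue (g : List ℕ) (k : ℕ) : ℕ :=
  ((List.range g.length).filter fun i => (g.take i).sum < k).length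

/-- The destandardization `D_g(T₀)`: each entry `j` of `T₀` is replaced by the unique `i`
with `g₁ + ⋯ + g_{i-1} < j ≤ g₁ + ⋯ + g_i`. -/
def Dmap (g : List ℕ) (T : Filling) : Filling := fun i j => destValue g (T i j)

/-- `Refines a b`: the composition `b` refines `a`, i.e. `b` can be cut into consecutive
blocks whose sums are the parts of `a` in order. -/
def Refines (a b : List ℕ) : Prop :=
  ∃ L : List (List ℕ), L.flatten = b ∧ L.map List.sum = a

/-- Strict lexicographic order on integer sequences. -/
def lexLt (a b : List ℕ) : Prop := List.Lex (· < ·) a b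

/-- Weak lexicographic order on integer sequences. -/
def lexLe (a b : List ℕ) : Prop := a = b ∨ lexLt a b

/-- The largest entry of `T`. -/
def maxEntry (lam : List ℕ) (T : Filling) : ℕ :=
  (cells lam).sup fun c => T c.1 c.2

/-- The weight of `T` (over all values), with zero parts deleted. -/
def wtFull (lam : List ℕ) (T : Filling) : List ℕ :=
  ((List.range (maxEntry lam T)).map fun v => countEq lam T (v + 1)).filter (· ≠ 0)

/-- The proper partial sums `α₁, α₁ + α₂, …, α₁ + ⋯ + α_{s-1}` of a composition. -/
def innerSums (a : List ℕ) : List ℕ :=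
  (List.range a.length).tail.map fun t => (a.take t).sum

/-- `f : Fin m → Fin n` encodes a sequence `1 ≤ i₁ ≤ i₂ ≤ … ≤ i_m ≤ n` (via `i_t = f (t-1) + 1`)
which ascends strictly, `i_j < i_{j+1}`, at every proper partial sum `j` of `a`. -/
def IsFWord (m n : ℕ) (a : List ℕ) (f : Fin m → Fin n) : Prop :=
  Monotone f ∧
    ∀ (t : ℕ) (ht : t + 1 < m), (t + 1) ∈ innerSums a →
      f ⟨t, Nat.lt_of_succ_lt ht⟩ < f ⟨t + 1, ht⟩

/-- The fundamental quasisymmetric polynomial `F_a(x₁, …, xₙ)` of degree `m`. -/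
noncomputable def Fpoly (m n : ℕ) (a : List ℕ) : MvPolynomial (Fin n) ℤ :=
  ∑ f ∈ Finset.univ.filter (fun f : Fin m → Fin n => IsFWord m n a f),
    ∏ t : Fin m, MvPolynomial.X (f t)

/-- The monomial `x₁^{γ₁} ⋯ xₙ^{γₙ}` of a tableau `T` of weight `γ`. -/
noncomputable def wtMonomial (lam : List ℕ) (n : ℕ) (T : Filling) :
    MvPolynomial (Fin n) ℤ :=
  ∏ i : Fin n, MvPolynomial.X i ^ countEq lam T (i.val + 1)

/-- `Rot` of a word `w` of length `k` on `{1, …, n}`: the `j`-th letter of `rot k n w`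
is `n + 1 - w_{k+1-j}` (1-based), here written 0-based. -/
def rot (k n : ℕ) (w : Fin k → ℕ) : Fin k → ℕ := fun j =>
  n + 1 - w ⟨k - 1 - j.val, by have := j.isLt; omega⟩

/-- The descent set of a word `w = w₁ ⋯ w_k`: positions `i ∈ {1, …, k-1}` with `wᵢ > w_{i+1}`
(1-based positions; `w ⟨i-1,_⟩` is `wᵢ`). -/
noncomputable def wordDes (k : ℕ) (w : Fin k → ℕ) : Finset ℕ :=
  (Finset.Ico 1 k).filter fun i =>
    ∃ (h1 : i - 1 < k) (h2 : i < k), w ⟨i, h2⟩ < w ⟨i - 1, h1⟩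

/-- The descent composition of a word of length `k`. -/
noncomputable def wordDesComp (k : ℕ) (w : Fin k → ℕ) : List ℕ :=
  if k = 0 then []
  else
    List.zipWith (· - ·) ((wordDes k w).sort (· ≤ ·) ++ [k])
      (0 :: (wordDes k w).sort (· ≤ ·))


/-! ### Section 1: prefix sums and destValue -/

def psum (g : List ℕ) (t : ℕ) : ℕ := (g.take t).sum

lemma psum_eq (g : List ℕ) : ∀ v, psum g v = ∑ u ∈ Finset.range v, g.getD u 0 := by
  induction g with
  | nil => intro v; simp [psum]
  | cons x g ih =>
    intro v
    cases v with
    | zero => simp [psum]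
    | succ v =>
      rw [Finset.sum_range_succ']
      have : psum (x :: g) (v + 1) = x + psum g v := by simp [psum]
      rw [this, ih v]
      simp [Nat.add_comm]

lemma psum_mono (g : List ℕ) : Monotone (psum g) := by
  intro s t hst
  rw [psum_eq, psum_eq]
  exact Finset.sum_le_sum_of_subset (Finset.range_subset_range.mpr hst)

lemma psum_length (g : List ℕ) : psum g g.length = g.sum := by
  simp [psum]

lemma psum_of_length_le (g : List ℕ) (v : ℕ) (h : g.length ≤ v) : psum g v = g.sum := by
  simp [psum, List.take_of_length_le h]

lemma psum_le_sum (g : List ℕ) (v : ℕ) : psum g v ≤ g.sum := by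
  rcases le_or_gt g.length v with h | h
  · rw [psum_of_length_le g v h]
  · rw [← psum_length]; exact psum_mono g h.le

lemma psum_succ (g : List ℕ) (v : ℕ) : psum g (v + 1) = psum g v + g.getD v 0 := by
  rw [psum_eq, psum_eq, Finset.sum_range_succ]

lemma filter_range_downclosed (L : ℕ) (p : ℕ → Bool) (hp : ∀ i j, i ≤ j → p j → p i) :
    (List.range L).filter p = List.range ((List.range L).filter p).length := by
  induction L with
  | zero => simp
  | succ L ih =>
    rw [List.range_succ, List.filter_append]
    by_cases h : p L
    · have hall : (List.range L).filter p = List.range L :=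
        List.filter_eq_self.mpr (fun a ha => hp a L (le_of_lt (List.mem_range.mp ha)) h)
      have h2 : List.filter p [L] = [L] := by rw [List.filter_singleton, h, cond_true]
      rw [hall, h2, List.length_append, List.length_range, List.length_singleton,
        ← List.range_succ]
    · have hf : p L = false := by simpa using h
      have h2 : List.filter p [L] = [] := by rw [List.filter_singleton, hf, cond_false]
      rw [h2, List.append_nil]
      exact ih

lemma destValue_filter_eq (g : List ℕ) (k : ℕ) :
    ((List.range g.length).filter fun i => (g.take i).sum < k) = List.range (destValue g k) := by
  exact filter_range_downclosed g.length _ (fun i j hij hj => by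
    simp only [decide_eq_true_eq] at *
    exact lt_of_le_of_lt (psum_mono g hij) hj)

lemma lt_destValue_iff (g : List ℕ) (k i : ℕ) (hi : i < g.length) :
    i < destValue g k ↔ psum g i < k := by
  constructor
  · intro h
    have : i ∈ List.range (destValue g k) := List.mem_range.mpr h
    rw [← destValue_filter_eq] at this
    simpa [psum] using (List.mem_filter.mp this).2
  · intro h
    have : i ∈ (List.range g.length).filter fun i => (g.take i).sum < k := by
      rw [List.mem_filter]
      exact ⟨List.mem_range.mpr hi, by simpa [psum] using h⟩
    rw [destValue_filter_eq] at this
    exact List.mem_range.mp this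

lemma destValue_le_length (g : List ℕ) (k : ℕ) : destValue g k ≤ g.length := by
  have := List.length_filter_le (fun i => decide ((g.take i).sum < k)) (List.range g.length)
  simpa [destValue] using this

lemma destValue_zero (g : List ℕ) : destValue g 0 = 0 := by
  simp [destValue]

lemma destValue_pos (g : List ℕ) (k : ℕ) (h0 : 0 < k) (hk : k ≤ g.sum) :
    0 < destValue g k := by
  have hg : 0 < g.length := by
    rcases g with _ | ⟨x, g⟩
    · simp at hk; omega
    · simp
  rw [lt_destValue_iff g k 0 hg]
  simpa [psum] using h0

lemma le_psum_destValue (g : List ℕ) (k : ℕ) (hk : k ≤ g.sum) :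
    k ≤ psum g (destValue g k) := by
  rcases eq_or_lt_of_le (destValue_le_length g k) with h | h
  · rw [h, psum_length]; exact hk
  · by_contra hc
    push_neg at hc
    have := (lt_destValue_iff g k (destValue g k) h).mpr hc
    omega

lemma psum_destValue_pred_lt (g : List ℕ) (k : ℕ) (h : 0 < destValue g k) :
    psum g (destValue g k - 1) < k := by
  have h1 : destValue g k - 1 < g.length := by
    have := destValue_le_length g k; omega
  exact (lt_destValue_iff g k _ h1).mp (by omega)

lemma destValue_le_iff (g : List ℕ) (k v : ℕ) (hk : k ≤ g.sum) :
    destValue g k ≤ v ↔ k ≤ psum g v := by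
  constructor
  · intro h
    exact le_trans (le_psum_destValue g k hk) (psum_mono g h)
  · intro h
    by_contra hc
    push_neg at hc
    have hv : v < g.length := lt_of_lt_of_le hc (destValue_le_length g k)
    have := (lt_destValue_iff g k v hv).mp hc
    omega

lemma destValue_eq_iff (g : List ℕ) (k v : ℕ) (_h0 : 0 < k) (hk : k ≤ g.sum) (hv : v < g.length) :
    destValue g k = v + 1 ↔ psum g v < k ∧ k ≤ psum g (v + 1) := by
  constructor
  · intro h
    refine ⟨(lt_destValue_iff g k v hv).mp (by omega), ?_⟩
    rw [← h]
    exact le_psum_destValue g k hk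
  · rintro ⟨h1, h2⟩
    have hlow : v < destValue g k := (lt_destValue_iff g k v hv).mpr h1
    have hhigh : destValue g k ≤ v + 1 := (destValue_le_iff g k (v+1) hk).mpr h2
    omega

lemma destValue_mono (g : List ℕ) (k k' : ℕ) (h : k ≤ k') : destValue g k ≤ destValue g k' := by
  unfold destValue
  rw [← List.countP_eq_length_filter, ← List.countP_eq_length_filter]
  apply List.countP_mono_left
  intro a _ ha
  simp only [decide_eq_true_eq] at *
  omega

/-! ### Section 2: cells, SYT counting -/

lemma mem_cells (lam : List ℕ) (c : ℕ × ℕ) : c ∈ cells lam ↔ InShape lam c.1 c.2 := by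
  unfold cells InShape
  simp only [Finset.mem_biUnion, Finset.mem_range, Finset.mem_product, Finset.mem_singleton]
  constructor
  · rintro ⟨i, hi, h1, h2⟩; subst h1; exact ⟨hi, h2⟩
  · rintro ⟨h1, h2⟩; exact ⟨c.1, h1, rfl, h2⟩

lemma card_cells (lam : List ℕ) : (cells lam).card = lam.sum := by
  unfold cells
  rw [Finset.card_biUnion]
  · have : ∀ i, (({i} : Finset ℕ) ×ˢ Finset.range (lam.getD i 0)).card = lam.getD i 0 := by
      intro i; rw [Finset.card_product]; simp
    rw [Finset.sum_congr rfl (fun i _ => this i), ← psum_eq, psum_length]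
  · intro x _ y _ hxy
    simp only [Finset.disjoint_left, Finset.mem_product, Finset.mem_singleton]
    rintro c ⟨h1, _⟩ ⟨h2, _⟩
    exact hxy (h1 ▸ h2 ▸ rfl)

lemma syt_unique_cell {lam : List ℕ} {m : ℕ} {T : Filling} (hT : IsSYT lam m T)
    {c c' : ℕ × ℕ} (hc : InShape lam c.1 c.2) (hc' : InShape lam c'.1 c'.2)
    (h : T c.1 c.2 = T c'.1 c'.2) : c = c' := by
  have h1 : 1 ≤ T c.1 c.2 := hT.1.2.1 c.1 c.2 hc
  have h2 : T c.1 c.2 ≤ m := hT.2.1 c.1 c.2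
  obtain ⟨u, _, hu⟩ := hT.2.2 (T c.1 c.2) h1 h2
  rw [hu c ⟨hc, rfl⟩, hu c' ⟨hc', h.symm⟩]

/-- Counting cells by a predicate on `T`-values equals counting values in `[1, m]`. -/
lemma card_filter_val (lam : List ℕ) (m : ℕ) (T : Filling) (hT : IsSYT lam m T)
    (p : ℕ → Prop) :
    ((cells lam).filter fun c => p (T c.1 c.2)).card
      = ((Finset.Icc 1 m).filter fun k => p k).card := by
  apply Finset.card_bij (fun c _ => T c.1 c.2)
  · intro c hc
    rw [Finset.mem_filter] at hc ⊢
    obtain ⟨hc1, hc2⟩ := hc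
    rw [mem_cells] at hc1
    exact ⟨Finset.mem_Icc.mpr ⟨hT.1.2.1 c.1 c.2 hc1, hT.2.1 c.1 c.2⟩, hc2⟩
  · intro c hc c' hc' h
    rw [Finset.mem_filter, mem_cells] at hc hc'
    exact syt_unique_cell hT hc.1 hc'.1 h
  · intro k hk
    rw [Finset.mem_filter, Finset.mem_Icc] at hk
    obtain ⟨⟨hk1, hk2⟩, hk3⟩ := hk
    obtain ⟨c, ⟨hcs, hcv⟩, _⟩ := hT.2.2 k hk1 hk2
    refine ⟨c, ?_, hcv⟩
    rw [Finset.mem_filter, mem_cells]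
    exact ⟨hcs, by rw [hcv]; exact hk3⟩

lemma rows_strict {lam : List ℕ} {m : ℕ} {T : Filling} (hT : IsSYT lam m T)
    {i j1 j2 : ℕ} (h : j1 < j2) (hin : InShape lam i j2) : T i j1 < T i j2 := by
  have hle := hT.1.2.2.1 i j1 j2 h.le hin
  rcases lt_or_eq_of_le hle with h' | h'
  · exact h'
  · exfalso
    have hin1 : InShape lam i j1 := ⟨hin.1, lt_trans h hin.2⟩
    have := syt_unique_cell hT (c := (i, j1)) (c' := (i, j2)) hin1 hin h'
    simp at this
    omega

/-! ### Section 3: descent-free intervals -/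

lemma not_descent_row_le {lam : List ℕ} {m : ℕ} {T : Filling} (_hT : IsSYT lam m T)
    {k : ℕ} (hnd : ¬ IsDescent lam T k)
    {i1 j1 i2 j2 : ℕ} (h1 : InShape lam i1 j1) (h2 : InShape lam i2 j2)
    (hv1 : T i1 j1 = k) (hv2 : T i2 j2 = k + 1) : i2 ≤ i1 := by
  by_contra hc
  exact hnd ⟨i1, j1, i2, j2, h1, h2, hv1, hv2, by omega⟩

lemma row_le_of_no_descent {lam : List ℕ} {m : ℕ} {T : Filling} (hT : IsSYT lam m T) :
    ∀ b a, 1 ≤ a → a ≤ b → b ≤ m → (∀ k, a ≤ k → k < b → ¬ IsDescent lam T k) →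
    ∀ i1 j1 i2 j2, InShape lam i1 j1 → InShape lam i2 j2 →
      T i1 j1 = a → T i2 j2 = b → i2 ≤ i1 := by
  intro b
  induction b with
  | zero => intro a h1 h2; omega
  | succ b ih =>
    intro a h1 h2 h3 hnd i1 j1 i2 j2 hin1 hin2 hv1 hv2
    rcases eq_or_lt_of_le h2 with he | hlt
    · have heq : ((i1:ℕ), j1) = ((i2:ℕ), j2) :=
        syt_unique_cell hT (c := (i1,j1)) (c' := (i2,j2)) hin1 hin2 (by simp [hv1, hv2, he])
      simp only [Prod.mk.injEq] at heq
      omega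
    · -- a ≤ b : get cell with value b
      have hb1 : 1 ≤ b := by omega
      obtain ⟨⟨ib, jb⟩, ⟨hinb, hvb⟩, _⟩ := hT.2.2 b hb1 (by omega)
      have step : i2 ≤ ib :=
        not_descent_row_le hT (hnd b (by omega) (by omega)) hinb hin2 hvb hv2
      have rest : ib ≤ i1 :=
        ih a h1 (by omega) (by omega) (fun k hk1 hk2 => hnd k hk1 (by omega))
          i1 j1 ib jb hin1 hinb hv1 hvb
      omega

lemma col_lt_of_not_descent {lam : List ℕ} {m : ℕ} {T : Filling} (hT : IsSYT lam m T)
    {k : ℕ} (hnd : ¬ IsDescent lam T k)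
    {i1 j1 i2 j2 : ℕ} (h1 : InShape lam i1 j1) (h2 : InShape lam i2 j2)
    (hv1 : T i1 j1 = k) (hv2 : T i2 j2 = k + 1) : j1 < j2 := by
  have hrow : i2 ≤ i1 := not_descent_row_le hT hnd h1 h2 hv1 hv2
  by_contra hc
  push_neg at hc  -- j2 ≤ j1
  rcases eq_or_lt_of_le hrow with he | hlt
  · -- same row
    subst he
    rcases eq_or_lt_of_le hc with he2 | hlt2
    · subst he2; omega
    · have := rows_strict hT hlt2 h1
      omega
  · -- i2 < i1: cell (i1, j2) in shape
    have hin : InShape lam i1 j2 := ⟨h1.1, lt_of_le_of_lt hc h1.2⟩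
    have hcol := hT.1.2.2.2 i2 i1 j2 hlt hin
    have hrow2 := hT.1.2.2.1 i1 j2 j1 hc h1
    omega

lemma col_le_of_no_descent {lam : List ℕ} {m : ℕ} {T : Filling} (hT : IsSYT lam m T) :
    ∀ b a, 1 ≤ a → a ≤ b → b ≤ m → (∀ k, a ≤ k → k < b → ¬ IsDescent lam T k) →
    ∀ i1 j1 i2 j2, InShape lam i1 j1 → InShape lam i2 j2 →
      T i1 j1 = a → T i2 j2 = b → j1 ≤ j2 := by
  intro b
  induction b with
  | zero => intro a h1 h2; omega
  | succ b ih =>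
    intro a h1 h2 h3 hnd i1 j1 i2 j2 hin1 hin2 hv1 hv2
    rcases eq_or_lt_of_le h2 with he | hlt
    · have heq : ((i1:ℕ), j1) = ((i2:ℕ), j2) :=
        syt_unique_cell hT (c := (i1,j1)) (c' := (i2,j2)) hin1 hin2 (by simp [hv1, hv2, he])
      simp only [Prod.mk.injEq] at heq
      omega
    · have hb1 : 1 ≤ b := by omega
      obtain ⟨⟨ib, jb⟩, ⟨hinb, hvb⟩, _⟩ := hT.2.2 b hb1 (by omega)
      have step : jb < j2 :=
        col_lt_of_not_descent hT (hnd b (by omega) (by omega)) hinb hin2 hvb hv2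
      have rest : j1 ≤ jb :=
        ih a h1 (by omega) (by omega) (fun k hk1 hk2 => hnd k hk1 (by omega))
          i1 j1 ib jb hin1 hinb hv1 hvb
      omega

lemma col_lt_of_no_descent {lam : List ℕ} {m : ℕ} {T : Filling} (hT : IsSYT lam m T)
    {b a : ℕ} (h1 : 1 ≤ a) (h2 : a < b) (h3 : b ≤ m)
    (hnd : ∀ k, a ≤ k → k < b → ¬ IsDescent lam T k)
    {i1 j1 i2 j2 : ℕ} (hin1 : InShape lam i1 j1) (hin2 : InShape lam i2 j2)
    (hv1 : T i1 j1 = a) (hv2 : T i2 j2 = b) : j1 < j2 := by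
  rcases b with _ | b
  · omega
  · obtain ⟨⟨ib, jb⟩, ⟨hinb, hvb⟩, _⟩ := hT.2.2 b (by omega) (by omega)
    have step : jb < j2 :=
      col_lt_of_not_descent hT (hnd b (by omega) (by omega)) hinb hin2 hvb hv2
    have rest : j1 ≤ jb :=
      col_le_of_no_descent hT b a h1 (by omega) (by omega)
        (fun k hk1 hk2 => hnd k hk1 (by omega)) i1 j1 ib jb hin1 hinb hv1 hvb
    omega

/-! ### Section 4: structure of the descent composition -/

def dd (b : ℕ) (l : List ℕ) (m : ℕ) : List ℕ :=
  List.zipWith (· - ·) (l ++ [m]) (b :: l)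

lemma dd_nil (b m : ℕ) : dd b [] m = [m - b] := rfl

lemma dd_cons (b x m : ℕ) (l : List ℕ) : dd b (x :: l) m = (x - b) :: dd x l m := rfl

lemma dd_length (b m : ℕ) (l : List ℕ) : (dd b l m).length = l.length + 1 := by
  induction l generalizing b with
  | nil => rfl
  | cons x l ih => rw [dd_cons, List.length_cons, ih x]; rfl

lemma pairwise_head_lt_getD {y m : ℕ} {l : List ℕ}
    (h : (y :: (l ++ [m])).Pairwise (· < ·)) (t : ℕ) : y < l.getD t m := by
  rw [List.pairwise_cons] at h
  rcases lt_or_ge t l.length with hlt | hle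
  · rw [List.getD_eq_getElem l m hlt]
    exact h.1 _ (List.mem_append_left _ (List.getElem_mem hlt))
  · rw [List.getD_eq_default l m hle]
    exact h.1 m (by simp)

lemma dd_pos {b m : ℕ} {l : List ℕ} (h : (b :: (l ++ [m])).Pairwise (· < ·)) :
    ∀ x ∈ dd b l m, 0 < x := by
  induction l generalizing b with
  | nil =>
    intro x hx
    rw [dd_nil] at hx
    simp only [List.mem_singleton] at hx
    have hbm : b < m := by
      rw [List.pairwise_cons] at h
      exact h.1 m (by simp)
    omega
  | cons y l ih =>
    intro x hx
    rw [dd_cons] at hx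
    rw [List.pairwise_cons] at h
    rcases List.mem_cons.mp hx with he | hm
    · have : b < y := h.1 y (by simp)
      omega
    · exact ih h.2 x hm

lemma dd_take_sum {b m : ℕ} {l : List ℕ} (h : (b :: (l ++ [m])).Pairwise (· < ·)) :
    ∀ t ≤ l.length, ((dd b l m).take (t + 1)).sum = l.getD t m - b := by
  induction l generalizing b with
  | nil =>
    intro t ht
    have : t = 0 := by simpa using ht
    subst this
    simp [dd_nil]
  | cons y l ih =>
    intro t ht
    rw [List.pairwise_cons] at h
    have hby : b < y := h.1 y (by simp)
    cases t with
    | zero => simp [dd_cons]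
    | succ t =>
      rw [dd_cons, List.take_succ_cons, List.sum_cons, ih h.2 t (by simpa using ht)]
      have hyg : y < l.getD t m := pairwise_head_lt_getD h.2 t
      have : (y :: l).getD (t + 1) m = l.getD t m := rfl
      rw [this]
      omega

lemma dd_sum {b m : ℕ} {l : List ℕ} (h : (b :: (l ++ [m])).Pairwise (· < ·)) :
    (dd b l m).sum = m - b := by
  have := dd_take_sum h l.length (le_refl _)
  rw [List.getD_eq_default l m (le_refl _)] at this
  rw [← this]
  rw [List.take_of_length_le (by rw [dd_length])]

/-! ### Section 5: Refines and prefix sums -/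

lemma refines_psum {a b : List ℕ} (h : Refines a b) (t : ℕ) :
    ∃ s, (b.take s).sum = (a.take t).sum := by
  obtain ⟨L, hf, hm⟩ := h
  refine ⟨((L.take t).flatten).length, ?_⟩
  have hb : b = (L.take t).flatten ++ (L.drop t).flatten := by
    rw [← List.flatten_append, List.take_append_drop, hf]
  have h1 : b.take ((L.take t).flatten).length = (L.take t).flatten := by
    rw [hb, List.take_left]
  rw [h1]
  have h2 : a.take t = (L.take t).map List.sum := by
    rw [← hm, List.map_take]
  rw [h2, List.sum_flatten]

lemma sum_filter_ne_zero (g : List ℕ) : (g.filter (· ≠ 0)).sum = g.sum := by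
  induction g with
  | nil => rfl
  | cons x g ih =>
    by_cases h : x = 0
    · subst h; simpa using ih
    · rw [List.filter_cons_of_pos (by simpa using h), List.sum_cons, List.sum_cons, ih]

lemma psum_filter_of_psum (g : List ℕ) :
    ∀ s, ∃ s', ((g.filter (· ≠ 0)).take s').sum = (g.take s).sum := by
  induction g with
  | nil => intro s; exact ⟨0, by simp⟩
  | cons x g ih =>
    intro s
    cases s with
    | zero => exact ⟨0, by simp⟩
    | succ s =>
      obtain ⟨s', hs'⟩ := ih s
      by_cases h : x = 0
      · subst h
        refine ⟨s', ?_⟩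
        simpa using hs'
      · refine ⟨s' + 1, ?_⟩
        rw [List.filter_cons_of_pos (by simpa using h)]
        simpa using hs'

lemma psum_of_psum_filter (g : List ℕ) :
    ∀ s, ∃ s', (g.take s').sum = ((g.filter (· ≠ 0)).take s).sum := by
  induction g with
  | nil => intro s; exact ⟨0, by simp⟩
  | cons x g ih =>
    intro s
    by_cases h : x = 0
    · subst h
      obtain ⟨s', hs'⟩ := ih s
      refine ⟨s' + 1, ?_⟩
      simpa using hs'
    · rw [List.filter_cons_of_pos (by simpa using h)]
      cases s with
      | zero => exact ⟨0, by simp⟩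
      | succ s =>
        obtain ⟨s', hs'⟩ := ih s
        refine ⟨s' + 1, ?_⟩
        simpa using hs'

lemma eq_nil_of_sum_eq_zero {b : List ℕ} (hb : ∀ x ∈ b, 0 < x) (h : b.sum = 0) : b = [] := by
  cases b with
  | nil => rfl
  | cons x b =>
    exfalso
    have := hb x (by simp)
    simp [List.sum_cons] at h
    omega

lemma refines_of_psums :
    ∀ (a b : List ℕ), (∀ x ∈ a, 0 < x) → (∀ x ∈ b, 0 < x) → a.sum = b.sum →
    (∀ t, t < a.length → ∃ s, (b.take s).sum = (a.take t).sum) → Refines a b := by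
  intro a
  induction a with
  | nil =>
    intro b _ hb hs _
    have : b = [] := eq_nil_of_sum_eq_zero hb (by simpa using hs.symm)
    subst this
    exact ⟨[], rfl, rfl⟩
  | cons x a ih =>
    intro b ha hb hs h
    cases a with
    | nil =>
      refine ⟨[b], by simp, ?_⟩
      simp only [List.map_cons, List.map_nil]
      rw [← hs]
      simp
    | cons y a' =>
      -- x is a prefix sum of b
      obtain ⟨s, hsx⟩ := h 1 (by simp)
      simp only [List.take_succ_cons, List.take_zero, List.sum_cons, List.sum_nil,
        Nat.add_zero] at hsx
      -- wlog s ≤ b.length? not needed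
      set b1 := b.take s with hb1
      set b2 := b.drop s with hb2
      have hbsplit : b = b1 ++ b2 := (List.take_append_drop s b).symm
      have hb1sum : b1.sum = x := hsx
      have hb2sum : (y :: a').sum = b2.sum := by
        have : b.sum = b1.sum + b2.sum := by rw [hbsplit, List.sum_append]
        rw [List.sum_cons] at hs
        omega
      have hx : 0 < x := ha x (by simp)
      have hy : 0 < y := ha y (by simp)
      have hb2pos : ∀ z ∈ b2, 0 < z := fun z hz => hb z (List.mem_of_mem_drop hz)
      have hslen : s ≤ b.length := by
        by_contra hc
        push_neg at hc
        have : b1 = b := by rw [hb1, List.take_of_length_le hc.le]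
        rw [this] at hb1sum
        rw [List.sum_cons, List.sum_cons] at hs
        have hsa : 0 < a'.sum + y := by
          have : 0 < y := hy
          omega
        omega
      have hrec : ∀ t, t < (y :: a').length →
          ∃ s', (b2.take s').sum = ((y :: a').take t).sum := by
        intro t ht
        cases t with
        | zero => exact ⟨0, by simp⟩
        | succ t =>
          obtain ⟨s'', hs''⟩ := h (t + 2) (by simpa using ht)
          have hsum_t : ((x :: y :: a').take (t + 2)).sum = x + ((y :: a').take (t+1)).sum := by
            simp [List.take_succ_cons]
          rw [hsum_t] at hs''
          have hpos : 0 < ((y :: a').take (t+1)).sum := by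
            simp only [List.take_succ_cons, List.sum_cons]
            omega
          have hgt : s < s'' := by
            by_contra hc
            push_neg at hc
            have : (b.take s'').sum ≤ (b.take s).sum := psum_mono b hc
            rw [hsx] at this
            omega
          refine ⟨s'' - s, ?_⟩
          rw [hb2]
          have : b.take s'' = b.take s ++ (b.drop s).take (s'' - s) := by
            rw [← List.take_add]
            congr 1
            omega
          rw [this, List.sum_append, hsx] at hs''
          omega
      obtain ⟨L', hL'f, hL'm⟩ := ih b2 (fun z hz => ha z (List.mem_cons_of_mem x hz))
        hb2pos hb2sum hrec
      refine ⟨b1 :: L', ?_, ?_⟩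
      · rw [List.flatten_cons, hL'f, ← hbsplit]
      · rw [List.map_cons, hL'm, hb1sum]

/-! ### Section 6: desComp via dd -/

lemma mem_descentList {lam : List ℕ} {m : ℕ} {T : Filling} {k : ℕ} :
    k ∈ descentList lam m T ↔ (1 ≤ k ∧ k < m ∧ IsDescent lam T k) := by
  unfold descentList
  rw [Finset.mem_sort, Finset.mem_filter, Finset.mem_Ico]
  tauto

lemma descentList_pairwise {lam : List ℕ} {m : ℕ} {T : Filling} (hm : m ≠ 0) :
    (0 :: (descentList lam m T ++ [m])).Pairwise (· < ·) := by
  rw [List.pairwise_cons]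
  constructor
  · intro y hy
    rcases List.mem_append.mp hy with h | h
    · have := mem_descentList.mp h; omega
    · simp only [List.mem_singleton] at h; omega
  · rw [List.pairwise_append]
    refine ⟨?_, by simp, ?_⟩
    · exact (Finset.sortedLT_sort _).pairwise
    · intro x hx y hy
      simp only [List.mem_singleton] at hy
      have := mem_descentList.mp hx
      omega

lemma desComp_eq_dd {lam : List ℕ} {m : ℕ} {T : Filling} (hm : m ≠ 0) :
    desComp lam m T = dd 0 (descentList lam m T) m := by
  unfold desComp dd
  rw [if_neg hm]

lemma desComp_pos {lam : List ℕ} {m : ℕ} {T : Filling} :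
    ∀ x ∈ desComp lam m T, 0 < x := by
  by_cases hm : m = 0
  · subst hm; unfold desComp; simp
  · rw [desComp_eq_dd hm]
    exact dd_pos (descentList_pairwise hm)

lemma desComp_sum {lam : List ℕ} {m : ℕ} {T : Filling} :
    (desComp lam m T).sum = m := by
  by_cases hm : m = 0
  · subst hm; unfold desComp; simp
  · rw [desComp_eq_dd hm, dd_sum (descentList_pairwise hm)]
    omega

lemma desComp_length {lam : List ℕ} {m : ℕ} {T : Filling} (hm : m ≠ 0) :
    (desComp lam m T).length = (descentList lam m T).length + 1 := by
  rw [desComp_eq_dd hm, dd_length]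

lemma desComp_take_sum {lam : List ℕ} {m : ℕ} {T : Filling} (hm : m ≠ 0) :
    ∀ t ≤ (descentList lam m T).length,
      ((desComp lam m T).take (t + 1)).sum = (descentList lam m T).getD t m := by
  intro t ht
  rw [desComp_eq_dd hm, dd_take_sum (descentList_pairwise hm) t ht]
  omega

/-! ### Section 7: SSYT weight and standardization lemmas -/

lemma sum_list_range (n : ℕ) (f : ℕ → ℕ) :
    ((List.range n).map f).sum = ∑ v ∈ Finset.range n, f v := by
  induction n with
  | zero => simp
  | succ n ih => rw [List.range_succ, List.map_append, List.sum_append, Finset.sum_range_succ, ih]; simp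

lemma getD_wt {lam : List ℕ} {n : ℕ} {T : Filling} {v : ℕ} (hv : v < n) :
    (wt lam n T).getD v 0 = countEq lam T (v + 1) := by
  unfold wt
  rw [List.getD_eq_getElem _ _ (by simpa using hv)]
  simp

lemma wt_sum {lam : List ℕ} {n : ℕ} {T : Filling} :
    (wt lam n T).sum = ∑ v ∈ Finset.range n, countEq lam T (v + 1) := by
  unfold wt
  exact sum_list_range n _

lemma countEq_disjoint {lam : List ℕ} {T : Filling} {v v' : ℕ} (h : v ≠ v') :
    Disjoint ((cells lam).filter fun c => T c.1 c.2 = v)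
      ((cells lam).filter fun c => T c.1 c.2 = v') := by
  rw [Finset.disjoint_left]
  intro c hc hc'
  rw [Finset.mem_filter] at hc hc'
  exact h (hc.2 ▸ hc'.2 ▸ rfl)

lemma entries_le_of_wt {lam : List ℕ} {n : ℕ} {T : Filling} {gamma : List ℕ}
    (hss : IsSSYT lam T) (hw : wt lam n T = gamma) (hsum : gamma.sum = lam.sum) :
    ∀ i j, InShape lam i j → T i j ≤ n := by
  intro i j hin
  set s : Finset (ℕ × ℕ) :=
    (Finset.range n).biUnion (fun v => (cells lam).filter fun c => T c.1 c.2 = v + 1) with hs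
  have hcard : s.card = (cells lam).card := by
    rw [hs, Finset.card_biUnion (fun x _ y _ hxy => countEq_disjoint (lam := lam) (T := T) (v := x + 1) (v' := y + 1) (by omega))]
    have : ∀ v ∈ Finset.range n, ((cells lam).filter fun c => T c.1 c.2 = v + 1).card
        = countEq lam T (v + 1) := fun v _ => rfl
    rw [Finset.sum_congr rfl this, ← wt_sum, hw, hsum, card_cells]
  have hsub : s ⊆ cells lam := by
    rw [hs]
    intro c hc
    rw [Finset.mem_biUnion] at hc
    obtain ⟨v, _, hc⟩ := hc
    exact (Finset.mem_filter.mp hc).1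
  have heq : s = cells lam := Finset.eq_of_subset_of_card_le hsub (le_of_eq hcard.symm)
  have hmem : (i, j) ∈ s := heq ▸ (mem_cells lam (i, j)).mpr hin
  rw [hs, Finset.mem_biUnion] at hmem
  obtain ⟨v, hv, hmem⟩ := hmem
  rw [Finset.mem_filter] at hmem
  rw [Finset.mem_range] at hv
  simp only at hmem
  omega

lemma card_le_val {lam : List ℕ} {n : ℕ} {T : Filling} {gamma : List ℕ}
    (hss : IsSSYT lam T) (hw : wt lam n T = gamma) {v : ℕ} (hv : v ≤ n) :
    ((cells lam).filter fun c => T c.1 c.2 ≤ v).card = psum gamma v := by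
  have hsplit : ((cells lam).filter fun c => T c.1 c.2 ≤ v)
      = (Finset.range v).biUnion (fun u => (cells lam).filter fun c => T c.1 c.2 = u + 1) := by
    ext c
    rw [Finset.mem_filter, Finset.mem_biUnion]
    constructor
    · rintro ⟨hc, hle⟩
      have hpos : 0 < T c.1 c.2 := hss.2.1 c.1 c.2 ((mem_cells lam c).mp hc)
      exact ⟨T c.1 c.2 - 1, Finset.mem_range.mpr (by omega),
        Finset.mem_filter.mpr ⟨hc, by omega⟩⟩
    · rintro ⟨u, hu, hc⟩
      rw [Finset.mem_filter] at hc
      rw [Finset.mem_range] at hu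
      exact ⟨hc.1, by omega⟩
  rw [hsplit, Finset.card_biUnion (fun x _ y _ hxy => countEq_disjoint (lam := lam) (T := T) (v := x + 1) (v' := y + 1) (by omega))]
  rw [psum_eq]
  apply Finset.sum_congr rfl
  intro u hu
  rw [Finset.mem_range] at hu
  rw [← hw, getD_wt (by omega)]
  rfl

lemma stdize_eq_card {lam : List ℕ} {T : Filling} {i j : ℕ} (hin : InShape lam i j) :
    stdize lam T i j = ((cells lam).filter fun c =>
      T c.1 c.2 < T i j ∨ (T c.1 c.2 = T i j ∧ c.2 ≤ j)).card := by
  unfold stdize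
  rw [if_pos hin]

lemma cell_eq_of_val_col {lam : List ℕ} {T : Filling} (hss : IsSSYT lam T)
    {c c' : ℕ × ℕ} (hc : InShape lam c.1 c.2) (hc' : InShape lam c'.1 c'.2)
    (hval : T c.1 c.2 = T c'.1 c'.2) (hcol : c.2 = c'.2) : c = c' := by
  rcases lt_trichotomy c.1 c'.1 with h | h | h
  · exfalso
    have := hss.2.2.2 c.1 c'.1 c'.2 h hc'
    rw [hcol] at hval
    omega
  · exact Prod.ext h hcol
  · exfalso
    have := hss.2.2.2 c'.1 c.1 c.2 h hc
    rw [← hcol] at hval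
    omega

lemma stdize_lt_stdize {lam : List ℕ} {T : Filling} (hss : IsSSYT lam T)
    {c c' : ℕ × ℕ} (hc : InShape lam c.1 c.2) (hc' : InShape lam c'.1 c'.2)
    (h : T c'.1 c'.2 < T c.1 c.2 ∨ (T c'.1 c'.2 = T c.1 c.2 ∧ c'.2 < c.2)) :
    stdize lam T c'.1 c'.2 < stdize lam T c.1 c.2 := by
  rw [stdize_eq_card hc, stdize_eq_card hc']
  apply Finset.card_lt_card
  rw [Finset.ssubset_iff_of_subset]
  · refine ⟨c, ?_, ?_⟩
    · rw [Finset.mem_filter]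
      exact ⟨(mem_cells lam c).mpr hc, Or.inr ⟨rfl, le_refl _⟩⟩
    · rw [Finset.mem_filter]
      rintro ⟨_, hor⟩
      rcases h with h1 | ⟨h1, h2⟩
      · rcases hor with h2 | ⟨h2, _⟩ <;> omega
      · rcases hor with h3 | ⟨h3, h4⟩ <;> omega
  · intro d hd
    rw [Finset.mem_filter] at hd ⊢
    refine ⟨hd.1, ?_⟩
    rcases h with h1 | ⟨h1, h2⟩
    · rcases hd.2 with h2 | ⟨h2, _⟩
      · left; omega
      · left; omega
    · rcases hd.2 with h3 | ⟨h3, h4⟩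
      · left; omega
      · right; exact ⟨by omega, by omega⟩

lemma col_lt_of_eq_val_row_lt {lam : List ℕ} {T : Filling} (hss : IsSSYT lam T)
    {c1 c2 : ℕ × ℕ} (h1 : InShape lam c1.1 c1.2) (h2 : InShape lam c2.1 c2.2)
    (hval : T c1.1 c1.2 = T c2.1 c2.2) (hrow : c1.1 < c2.1) : c2.2 < c1.2 := by
  by_contra hc
  push_neg at hc
  have hin : InShape lam c2.1 c1.2 := ⟨h2.1, lt_of_le_of_lt hc h2.2⟩
  have hA := hss.2.2.2 c1.1 c2.1 c1.2 hrow hin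
  have hB := hss.2.2.1 c2.1 c1.2 c2.2 hc h2
  omega

/-! ### Section 8a: uniqueness -/

lemma eq_dmap {m n : ℕ} {lam : List ℕ} {T₀ T : Filling} {gamma : List ℕ}
    (hT₀ : IsSYT lam m T₀) (hlamsum : lam.sum = m)
    (hlen : gamma.length = n) (hsum : gamma.sum = m)
    (hss : IsSSYT lam T) (hw : wt lam n T = gamma) (hstd : stdize lam T = T₀) :
    T = Dmap gamma T₀ := by
  funext i j
  by_cases hin : InShape lam i j
  · have hx1 : 1 ≤ T i j := hss.2.1 i j hin
    have hxn : T i j ≤ n := entries_le_of_wt hss hw (by omega) i j hin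
    set x := T i j with hxdef
    -- compute stdize value r
    have hr : stdize lam T i j = ((cells lam).filter fun c =>
        T c.1 c.2 < x ∨ (T c.1 c.2 = x ∧ c.2 ≤ j)).card := stdize_eq_card hin
    set r := stdize lam T i j with hrdef
    have hsplit : ((cells lam).filter fun c =>
        T c.1 c.2 < x ∨ (T c.1 c.2 = x ∧ c.2 ≤ j)).card
        = ((cells lam).filter fun c => T c.1 c.2 < x).card
          + ((cells lam).filter fun c => T c.1 c.2 = x ∧ c.2 ≤ j).card := by
      rw [Finset.filter_or, Finset.card_union_of_disjoint]
      rw [Finset.disjoint_left]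
      intro c hc hc'
      rw [Finset.mem_filter] at hc hc'
      omega
    have hA : ((cells lam).filter fun c => T c.1 c.2 < x).card = psum gamma (x - 1) := by
      rw [Finset.filter_congr (fun c _ => show (T c.1 c.2 < x) ↔ (T c.1 c.2 ≤ x - 1) by omega)]
      exact card_le_val hss hw (by omega)
    have hB1 : 1 ≤ ((cells lam).filter fun c => T c.1 c.2 = x ∧ c.2 ≤ j).card := by
      rw [Nat.one_le_iff_ne_zero, ← Nat.pos_iff_ne_zero, Finset.card_pos]
      exact ⟨(i, j), Finset.mem_filter.mpr ⟨(mem_cells lam (i, j)).mpr hin, rfl, le_refl j⟩⟩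
    have hB2 : ((cells lam).filter fun c => T c.1 c.2 = x ∧ c.2 ≤ j).card
        ≤ gamma.getD (x - 1) 0 := by
      rw [← hw, getD_wt (by omega)]
      have hxx : x - 1 + 1 = x := by omega
      rw [hxx]
      apply Finset.card_le_card
      intro c hc
      rw [Finset.mem_filter] at hc ⊢
      exact ⟨hc.1, hc.2.1⟩
    have hrange : psum gamma (x - 1) < r ∧ r ≤ psum gamma x := by
      constructor
      · rw [hr, hsplit, hA]; omega
      · rw [hr, hsplit, hA]
        have hps : psum gamma (x - 1 + 1) = psum gamma (x - 1) + gamma.getD (x - 1) 0 :=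
          psum_succ gamma (x - 1)
        have hxx : x - 1 + 1 = x := by omega
        rw [hxx] at hps
        omega
    have hdv : destValue gamma r = x := by
      have := (destValue_eq_iff gamma r (x - 1) (by omega)
        (le_trans hrange.2 (psum_le_sum gamma x))
        (by omega)).mpr ⟨hrange.1, by rw [show x - 1 + 1 = x by omega]; exact hrange.2⟩
      omega
    show x = Dmap gamma T₀ i j
    rw [← hstd]
    show x = destValue gamma r
    omega
  · have h1 : T i j = 0 := hss.1 i j hin
    have h2 : T₀ i j = 0 := hT₀.1.1 i j hin
    show T i j = destValue gamma (T₀ i j)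
    rw [h1, h2, destValue_zero]

/-! ### Section 8b: descents give prefix sums of the weight -/

lemma descent_psum_of_std {m n : ℕ} {lam : List ℕ} {T₀ T : Filling} {gamma : List ℕ}
    (hT₀ : IsSYT lam m T₀) (hlamsum : lam.sum = m)
    (hss : IsSSYT lam T) (hw : wt lam n T = gamma) (hstd : stdize lam T = T₀) (hsum : gamma.sum = m)
    {k : ℕ} (hd : IsDescent lam T₀ k) : ∃ v, v ≤ n ∧ psum gamma v = k := by
  obtain ⟨i1, j1, i2, j2, hin1, hin2, hv1, hv2, hrow⟩ := hd
  rw [← hstd] at hv1 hv2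
  -- T (i1,j1) < T (i2,j2)
  have hTlt : T i1 j1 < T i2 j2 := by
    rcases lt_trichotomy (T i1 j1) (T i2 j2) with h | h | h
    · exact h
    · exfalso
      have hcol : j2 < j1 := col_lt_of_eq_val_row_lt hss (c1 := (i1, j1)) (c2 := (i2, j2))
        hin1 hin2 h hrow
      have := stdize_lt_stdize hss (c := (i1, j1)) (c' := (i2, j2)) hin1 hin2
        (Or.inr ⟨h.symm, hcol⟩)
      dsimp only at this
      omega
    · exfalso
      have := stdize_lt_stdize hss (c := (i1, j1)) (c' := (i2, j2)) hin1 hin2 (Or.inl h)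
      dsimp only at this
      omega
  set v := T i1 j1 with hvdef
  have hv1' : 1 ≤ v := hss.2.1 i1 j1 hin1
  have hvn : v ≤ n := entries_le_of_wt hss hw (by omega) i1 j1 hin1
  refine ⟨v, hvn, ?_⟩
  have hkcard : k = ((cells lam).filter fun c =>
      T c.1 c.2 < v ∨ (T c.1 c.2 = v ∧ c.2 ≤ j1)).card := by
    rw [← hv1, stdize_eq_card hin1]
  have hseteq : ((cells lam).filter fun c =>
      T c.1 c.2 < v ∨ (T c.1 c.2 = v ∧ c.2 ≤ j1))
      = ((cells lam).filter fun c => T c.1 c.2 ≤ v) := by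
    apply Finset.filter_congr
    intro c hc
    rw [mem_cells] at hc
    constructor
    · intro h; omega
    · intro h
      rcases lt_or_eq_of_le h with h' | h'
      · exact Or.inl h'
      · refine Or.inr ⟨h', ?_⟩
        by_contra hcj
        push_neg at hcj
        have hlt1 := stdize_lt_stdize hss (c := c) (c' := (i1, j1)) hc hin1
          (Or.inr ⟨h'.symm, hcj⟩)
        have hlt2 := stdize_lt_stdize hss (c := (i2, j2)) (c' := c) hin2 hc
          (Or.inl (by dsimp only; omega))
        dsimp only at hlt1 hlt2
        omega
  have hcard2 : ((cells lam).filter fun c => T c.1 c.2 ≤ v).card = psum gamma v :=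
    card_le_val hss hw hvn
  rw [hkcard, hseteq, hcard2]

/-! ### Section 8c: existence implies refinement -/

lemma refines_of_props {m n : ℕ} {lam : List ℕ} {T₀ T : Filling} {gamma : List ℕ}
    (hT₀ : IsSYT lam m T₀) (hlamsum : lam.sum = m)
    (hlen : gamma.length = n) (hsum : gamma.sum = m)
    (hss : IsSSYT lam T) (hw : wt lam n T = gamma) (hstd : stdize lam T = T₀) :
    Refines (desComp lam m T₀) (gamma.filter (· ≠ 0)) := by
  apply refines_of_psums
  · exact desComp_pos
  · intro x hx
    have := List.of_mem_filter hx
    simp only [ne_eq, decide_not, Bool.not_eq_true', decide_eq_false_iff_not] at this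
    omega
  · rw [desComp_sum, sum_filter_ne_zero, hsum]
  · intro t ht
    cases t with
    | zero => exact ⟨0, by simp⟩
    | succ t =>
      have hm : m ≠ 0 := by
        intro hm0
        subst hm0
        unfold desComp at ht
        simp at ht
      rw [desComp_length hm] at ht
      have htl : t < (descentList lam m T₀).length := by omega
      have hksum : ((desComp lam m T₀).take (t + 1)).sum
          = (descentList lam m T₀).getD t m := desComp_take_sum hm t (by omega)
      set k := (descentList lam m T₀).getD t m with hkdef
      have hkmem : k ∈ descentList lam m T₀ := by
        rw [hkdef, List.getD_eq_getElem _ _ htl]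
        exact List.getElem_mem htl
      obtain ⟨hk1, hk2, hkd⟩ := mem_descentList.mp hkmem
      obtain ⟨v, _, hv⟩ := descent_psum_of_std hT₀ hlamsum hss hw hstd hsum hkd
      obtain ⟨s, hs⟩ := psum_filter_of_psum gamma v
      refine ⟨s, ?_⟩
      rw [hksum, hs]
      exact hv

/-! ### Section 8d: destandardization under refinement -/

lemma descents_psum_of_refines {m : ℕ} {lam : List ℕ} {T₀ : Filling} {gamma : List ℕ}
    (hsum : gamma.sum = m)
    (href : Refines (desComp lam m T₀) (gamma.filter (· ≠ 0))) :
    ∀ k, IsDescent lam T₀ k → 1 ≤ k → k < m →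
      ∃ v, v < gamma.length ∧ psum gamma v = k := by
  intro k hkd hk1 hk2
  have hm : m ≠ 0 := by omega
  have hkmem : k ∈ descentList lam m T₀ := mem_descentList.mpr ⟨hk1, hk2, hkd⟩
  obtain ⟨⟨t, htl⟩, ht⟩ := List.mem_iff_get.mp hkmem
  have hksum : ((desComp lam m T₀).take (t + 1)).sum = k := by
    rw [desComp_take_sum hm t htl.le, List.getD_eq_getElem _ _ htl]
    exact ht
  obtain ⟨s, hs⟩ := refines_psum href (t + 1)
  rw [hksum] at hs
  obtain ⟨s', hs'⟩ := psum_of_psum_filter gamma s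
  rw [hs] at hs'
  have hlen' : s' < gamma.length := by
    by_contra hc
    push_neg at hc
    rw [List.take_of_length_le hc] at hs'
    omega
  exact ⟨s', hlen', hs'⟩

lemma dmap_ssyt {m : ℕ} {lam : List ℕ} {T₀ : Filling} {gamma : List ℕ}
    (hT₀ : IsSYT lam m T₀) (hsum : gamma.sum = m)
    (hdes : ∀ k, IsDescent lam T₀ k → 1 ≤ k → k < m →
      ∃ v, v < gamma.length ∧ psum gamma v = k) :
    IsSSYT lam (Dmap gamma T₀) := by
  refine ⟨?_, ?_, ?_, ?_⟩
  · intro i j hin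
    show destValue gamma (T₀ i j) = 0
    rw [hT₀.1.1 i j hin, destValue_zero]
  · intro i j hin
    exact destValue_pos gamma (T₀ i j) (hT₀.1.2.1 i j hin) (by rw [hsum]; exact hT₀.2.1 i j)
  · intro i j1 j2 hj hin
    exact destValue_mono gamma _ _ (hT₀.1.2.2.1 i j1 j2 hj hin)
  · intro i1 i2 j hi hin2
    by_cases hin1 : InShape lam i1 j
    · show destValue gamma (T₀ i1 j) < destValue gamma (T₀ i2 j)
      have ha1 : 1 ≤ T₀ i1 j := hT₀.1.2.1 i1 j hin1
      have hab : T₀ i1 j < T₀ i2 j := hT₀.1.2.2.2 i1 i2 j hi hin2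
      have hbm : T₀ i2 j ≤ m := hT₀.2.1 i2 j
      by_cases hex : ∃ k, T₀ i1 j ≤ k ∧ k < T₀ i2 j ∧ IsDescent lam T₀ k
      · obtain ⟨k, hka, hkb, hkd⟩ := hex
        obtain ⟨v, hvlen, hvps⟩ := hdes k hkd (by omega) (by omega)
        have h1 : destValue gamma (T₀ i1 j) ≤ v :=
          (destValue_le_iff gamma _ v (by omega)).mpr (by omega)
        have h2 : v < destValue gamma (T₀ i2 j) :=
          (lt_destValue_iff gamma _ v hvlen).mpr (by omega)
        omega
      · exfalso
        push_neg at hex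
        have hnd : ∀ k, T₀ i1 j ≤ k → k < T₀ i2 j → ¬ IsDescent lam T₀ k := by
          intro k h1 h2 hk
          exact absurd hk (by
            have := hex k h1
            tauto)
        have := row_le_of_no_descent hT₀ (T₀ i2 j) (T₀ i1 j) ha1 hab.le hbm hnd
          i1 j i2 j hin1 hin2 rfl rfl
        omega
    · show destValue gamma (T₀ i1 j) < destValue gamma (T₀ i2 j)
      rw [hT₀.1.1 i1 j hin1, destValue_zero]
      exact destValue_pos gamma (T₀ i2 j) (hT₀.1.2.1 i2 j hin2) (by rw [hsum]; exact hT₀.2.1 i2 j)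

lemma dmap_wt {m n : ℕ} {lam : List ℕ} {T₀ : Filling} {gamma : List ℕ}
    (hT₀ : IsSYT lam m T₀) (hlen : gamma.length = n) (hsum : gamma.sum = m) :
    wt lam n (Dmap gamma T₀) = gamma := by
  apply List.ext_getElem
  · simp [wt, hlen]
  · intro v hv1 hv2
    have hvn : v < n := by simpa [wt] using hv1
    have hgoal : countEq lam (Dmap gamma T₀) (v + 1) = gamma[v] := by
      have hstep : countEq lam (Dmap gamma T₀) (v + 1)
          = ((Finset.Icc 1 m).filter fun k => destValue gamma k = v + 1).card := by
        unfold countEq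
        convert card_filter_val lam m T₀ hT₀ (fun k => destValue gamma k = v + 1) using 2 <;>
          (ext c; simp only [Finset.mem_filter, Dmap])
        exact Finset.mem_filter
      rw [hstep]
      have hfe : ((Finset.Icc 1 m).filter fun k => destValue gamma k = v + 1)
          = Finset.Ioc (psum gamma v) (psum gamma (v + 1)) := by
        ext k
        rw [Finset.mem_filter, Finset.mem_Icc, Finset.mem_Ioc]
        constructor
        · rintro ⟨⟨h1, h2⟩, h3⟩
          exact (destValue_eq_iff gamma k v (by omega) (by omega) (by omega)).mp h3
        · rintro ⟨h1, h2⟩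
          have hp1 : psum gamma (v + 1) ≤ m := by
            have := psum_le_sum gamma (v + 1); omega
          refine ⟨⟨by omega, by omega⟩, ?_⟩
          exact (destValue_eq_iff gamma k v (by omega) (by omega) (by omega)).mpr ⟨h1, h2⟩
        
      rw [hfe, Nat.card_Ioc, psum_succ]
      rw [List.getD_eq_getElem _ _ hv2]
      omega
    simpa [wt, hvn] using hgoal

/-! ### Section 8e: standardization of the destandardization -/

lemma dmap_stdize {m n : ℕ} {lam : List ℕ} {T₀ : Filling} {gamma : List ℕ}
    (hT₀ : IsSYT lam m T₀) (hlen : gamma.length = n) (hsum : gamma.sum = m)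
    (hdes : ∀ k, IsDescent lam T₀ k → 1 ≤ k → k < m →
      ∃ v, v < gamma.length ∧ psum gamma v = k) :
    stdize lam (Dmap gamma T₀) = T₀ := by
  funext i j
  by_cases hin : InShape lam i j
  swap
  · unfold stdize
    rw [if_neg hin, hT₀.1.1 i j hin]
  · have hk1 : 1 ≤ T₀ i j := hT₀.1.2.1 i j hin
    have hk2 : T₀ i j ≤ m := hT₀.2.1 i j
    set k₀ := T₀ i j with hk₀
    set t := destValue gamma k₀ with htdef
    have ht1 : 1 ≤ t := destValue_pos gamma k₀ hk1 (by omega)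
    have htlen : t ≤ gamma.length := destValue_le_length gamma k₀
    have hlow : psum gamma (t - 1) < k₀ := psum_destValue_pred_lt gamma k₀ ht1
    have hhigh : k₀ ≤ psum gamma t := le_psum_destValue gamma k₀ (by omega)
    have hplow : psum gamma (t - 1) ≤ m := by have := psum_le_sum gamma (t - 1); omega
    have hphigh : psum gamma t ≤ m := by have := psum_le_sum gamma t; omega
    -- no descent strictly inside the block
    have hnodes : ∀ kk, psum gamma (t - 1) < kk → kk < psum gamma t → ¬ IsDescent lam T₀ kk := by
      intro kk hlo hhi hd
      obtain ⟨w, hwlen, hwps⟩ := hdes kk hd (by omega) (by omega)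
      rcases le_or_gt w (t - 1) with hw | hw
      · have := psum_mono gamma hw; omega
      · have := psum_mono gamma (show t ≤ w by omega); omega
    rw [stdize_eq_card hin]
    have hDij : Dmap gamma T₀ i j = t := rfl
    have hsplit : ((cells lam).filter fun c =>
        Dmap gamma T₀ c.1 c.2 < Dmap gamma T₀ i j ∨
          (Dmap gamma T₀ c.1 c.2 = Dmap gamma T₀ i j ∧ c.2 ≤ j)).card
        = ((cells lam).filter fun c => Dmap gamma T₀ c.1 c.2 < Dmap gamma T₀ i j).card
          + ((cells lam).filter fun c =>
              Dmap gamma T₀ c.1 c.2 = Dmap gamma T₀ i j ∧ c.2 ≤ j).card := by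
      rw [Finset.filter_or, Finset.card_union_of_disjoint]
      rw [Finset.disjoint_left]
      intro c hc hc'
      rw [Finset.mem_filter] at hc hc'
      omega
    have hA : ((cells lam).filter fun c => Dmap gamma T₀ c.1 c.2 < Dmap gamma T₀ i j).card
        = psum gamma (t - 1) := by
      have he : ((cells lam).filter fun c => Dmap gamma T₀ c.1 c.2 < Dmap gamma T₀ i j)
          = ((cells lam).filter fun c => T₀ c.1 c.2 ≤ psum gamma (t - 1)) := by
        apply Finset.filter_congr
        intro c hc
        rw [mem_cells] at hc
        have hxm : T₀ c.1 c.2 ≤ m := hT₀.2.1 c.1 c.2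
        have hiff := destValue_le_iff gamma (T₀ c.1 c.2) (t - 1) (by omega)
        rw [hDij]
        show destValue gamma (T₀ c.1 c.2) < t ↔ _
        omega
      rw [he]
      have hcv := card_filter_val lam m T₀ hT₀ (fun k => k ≤ psum gamma (t - 1))
      have he2 : ((Finset.Icc 1 m).filter fun k => k ≤ psum gamma (t - 1))
          = Finset.Icc 1 (psum gamma (t - 1)) := by
        ext k
        simp only [Finset.mem_filter, Finset.mem_Icc]
        omega
      have he3 : ((cells lam).filter fun c => T₀ c.1 c.2 ≤ psum gamma (t - 1)).card
          = ((Finset.Icc 1 m).filter fun k => k ≤ psum gamma (t - 1)).card := by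
        convert hcv using 2 <;> (ext c; simp only [Finset.mem_filter])
      rw [he3, he2, Nat.card_Icc]
      omega
    have hB : ((cells lam).filter fun c =>
        Dmap gamma T₀ c.1 c.2 = Dmap gamma T₀ i j ∧ c.2 ≤ j).card = k₀ - psum gamma (t - 1) := by
      have he : ((cells lam).filter fun c =>
          Dmap gamma T₀ c.1 c.2 = Dmap gamma T₀ i j ∧ c.2 ≤ j)
          = ((cells lam).filter fun c =>
              psum gamma (t - 1) < T₀ c.1 c.2 ∧ T₀ c.1 c.2 ≤ k₀) := by
        apply Finset.filter_congr
        intro c hc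
        rw [mem_cells] at hc
        have hx1 : 1 ≤ T₀ c.1 c.2 := hT₀.1.2.1 c.1 c.2 hc
        have hxm : T₀ c.1 c.2 ≤ m := hT₀.2.1 c.1 c.2
        have hiff : destValue gamma (T₀ c.1 c.2) = (t - 1) + 1 ↔
            (psum gamma (t - 1) < T₀ c.1 c.2 ∧ T₀ c.1 c.2 ≤ psum gamma ((t - 1) + 1)) :=
          destValue_eq_iff gamma (T₀ c.1 c.2) (t - 1) (by omega) (by omega) (by omega)
        rw [show (t - 1) + 1 = t by omega] at hiff
        rw [hDij]
        show destValue gamma (T₀ c.1 c.2) = t ∧ c.2 ≤ j ↔ _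
        constructor
        · rintro ⟨hdv, hcj⟩
          obtain ⟨hgt, hle⟩ := hiff.mp hdv
          refine ⟨hgt, ?_⟩
          by_contra hgt2
          push_neg at hgt2
          have hcol := col_lt_of_no_descent hT₀ (a := k₀) (b := T₀ c.1 c.2) hk1 hgt2
            hxm (fun kk h1 h2 => hnodes kk (by omega) (by omega))
            (i1 := i) (j1 := j) (i2 := c.1) (j2 := c.2) hin hc rfl rfl
          omega
        · rintro ⟨hgt, hle⟩
          refine ⟨hiff.mpr ⟨hgt, by omega⟩, ?_⟩
          rcases lt_or_eq_of_le hle with hlt | heq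
          · have hcol := col_lt_of_no_descent hT₀ (a := T₀ c.1 c.2) (b := k₀) hx1 hlt
              (by omega) (fun kk h1 h2 => hnodes kk (by omega) (by omega))
              (i1 := c.1) (j1 := c.2) (i2 := i) (j2 := j) hc hin rfl rfl
            omega
          · have := syt_unique_cell hT₀ (c := c) (c' := (i, j)) hc hin heq
            rw [this]
      rw [he]
      have hcv := card_filter_val lam m T₀ hT₀
        (fun k => psum gamma (t - 1) < k ∧ k ≤ k₀)
      have he2 : ((Finset.Icc 1 m).filter fun k => psum gamma (t - 1) < k ∧ k ≤ k₀)
          = Finset.Ioc (psum gamma (t - 1)) k₀ := by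
        ext k
        simp only [Finset.mem_filter, Finset.mem_Icc, Finset.mem_Ioc]
        omega
      have he3 : ((cells lam).filter fun c =>
          psum gamma (t - 1) < T₀ c.1 c.2 ∧ T₀ c.1 c.2 ≤ k₀).card
          = ((Finset.Icc 1 m).filter fun k => psum gamma (t - 1) < k ∧ k ≤ k₀).card := by
        convert hcv using 2 <;> (ext c; simp only [Finset.mem_filter])
      rw [he3, he2, Nat.card_Ioc]
    rw [hsplit, hA, hB]
    omega
/-- Let `T₀` be a standard Young tableau of shape `lam ⊢ m` with descent composition `alpha`
and `gamma` a weak composition of `m` with `n` parts. If `gamma` with its zero parts deleted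
refines `alpha`, then there is exactly one semistandard tableau `T` of shape `lam` with
weight `gamma` and standardization `T₀`; otherwise there is none. -/
theorem unique_ssyt_with_weight_and_standardization (m n : ℕ) (lam : List ℕ)
    (hlam : IsPartitionOf m lam) (T₀ : Filling) (hT₀ : IsSYT lam m T₀)
    (alpha : List ℕ) (halpha : desComp lam m T₀ = alpha)
    (gamma : List ℕ) (hlen : gamma.length = n) (hsum : gamma.sum = m) :
    (Refines alpha (gamma.filter (· ≠ 0)) →
      ∃! T : Filling, IsSSYT lam T ∧ wt lam n T = gamma ∧ stdize lam T = T₀) ∧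
    (¬ Refines alpha (gamma.filter (· ≠ 0)) →
      ∀ T : Filling, ¬ (IsSSYT lam T ∧ wt lam n T = gamma ∧ stdize lam T = T₀)) := by
  have hlamsum : lam.sum = m := hlam.2.2
  subst halpha
  constructor
  · intro href
    have hdes := descents_psum_of_refines hsum href
    refine ⟨Dmap gamma T₀,
      ⟨dmap_ssyt hT₀ hsum hdes, dmap_wt hT₀ hlen hsum, dmap_stdize hT₀ hlen hsum hdes⟩, ?_⟩
    rintro T ⟨h1, h2, h3⟩
    exact eq_dmap hT₀ hlamsum hlen hsum h1 h2 h3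
  · rintro href T ⟨h1, h2, h3⟩
    exact href (refines_of_props hT₀ hlamsum hlen hsum h1 h2 h3)

end QC
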